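/- Let n ≥ 1 be an integer, let a < b be reals, let J be an open interval containing [a,b], and let f : ℝ → ℝ be 2n-times differentiable on J with f^{(2n)}(x) > 0 for every x ∈ [a,b]. If f(x) ≥ 0 for every x ∈ [a,b] and f(a) > 0 and f(b) > 0, then the set { x ∈ [a,b] : f(x) = 0 } has at most n elements. -/

import Mathlib

lemma iteratedDerivWithin_eqOn_open (f : ℝ → ℝ) (s : Set ℝ) (hs : IsOpen s) (n : ℕ) :
    Set.EqOn (iteratedDerivWithin n f s) (iteratedDeriv n f) s := fun x hx => by
  rw [iteratedDerivWithin_eq_iteratedFDerivWithin, iteratedDeriv_eq_iteratedFDeriv,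
    iteratedFDerivWithin_of_isOpen n hs hx]

/-- Rolle chain step: from m+2 increasing zeros of g, get m+1 increasing zeros of deriv g. -/
lemma rolle_chain (a b : ℝ) (g : ℝ → ℝ) (hg : ContinuousOn g (Set.Icc a b))
    (m : ℕ) (y : Fin (m + 2) → ℝ) (hy : StrictMono y)
    (hmem : ∀ i, y i ∈ Set.Icc a b) (hz : ∀ i, g (y i) = 0) :
    ∃ c : Fin (m + 1) → ℝ, StrictMono c ∧ (∀ i, c i ∈ Set.Icc a b) ∧
      ∀ i, deriv g (c i) = 0 := by
  have hlt : ∀ i : Fin (m + 1), y i.castSucc < y i.succ :=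
    fun i => hy (Fin.castSucc_lt_succ (i := i))
  have key : ∀ i : Fin (m + 1), ∃ c ∈ Set.Ioo (y i.castSucc) (y i.succ), deriv g c = 0 := by
    intro i
    refine exists_deriv_eq_zero (hlt i) (hg.mono ?_) (by rw [hz, hz])
    intro t ht
    exact ⟨le_trans (hmem i.castSucc).1 ht.1, le_trans ht.2 (hmem i.succ).2⟩
  choose c hc hc0 using key
  refine ⟨c, ?_, ?_, hc0⟩
  · rw [Fin.strictMono_iff_lt_succ]
    intro i
    calc c i.castSucc < y i.castSucc.succ := (hc i.castSucc).2
    _ = y i.succ.castSucc := by rw [Fin.succ_castSucc]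
    _ < c i.succ := (hc i.succ).1
  · intro i
    exact ⟨le_trans (hmem i.castSucc).1 (hc i).1.le, le_trans (hc i).2.le (hmem i.succ).2⟩

theorem statement9 (n : ℕ) (hn : 1 ≤ n) (a b : ℝ) (hab : a < b)
    (J : Set ℝ) (hJopen : IsOpen J) (hJord : J.OrdConnected) (hJ : Set.Icc a b ⊆ J)
    (f : ℝ → ℝ)
    (hdiff : ∀ i < 2 * n, DifferentiableOn ℝ (iteratedDerivWithin i f J) J)
    (hpos : ∀ x ∈ Set.Icc a b, 0 < iteratedDerivWithin (2 * n) f J x)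
    (hnonneg : ∀ x ∈ Set.Icc a b, 0 ≤ f x)
    (hfa : 0 < f a) (hfb : 0 < f b) :
    {x | x ∈ Set.Icc a b ∧ f x = 0}.encard ≤ (n : ℕ∞) := by
  -- transfer hypotheses to global iterated derivatives
  have hdiff' : ∀ i < 2 * n, DifferentiableOn ℝ (iteratedDeriv i f) J := by
    intro i hi
    exact (hdiff i hi).congr fun x hx =>
      (iteratedDerivWithin_eqOn_open f J hJopen i hx).symm
  have hpos' : ∀ x ∈ Set.Icc a b, 0 < iteratedDeriv (2 * n) f x := by
    intro x hx
    rw [← iteratedDerivWithin_eqOn_open f J hJopen (2 * n) (hJ hx)]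
    exact hpos x hx
  -- continuity of iterated derivatives up to order 2n - 1 on Icc a b
  have hcont : ∀ i < 2 * n, ContinuousOn (iteratedDeriv i f) (Set.Icc a b) :=
    fun i hi => ((hdiff' i hi).continuousOn).mono hJ
  -- descending Rolle: j + k = 2n with k+2 increasing zeros of iteratedDeriv j f gives False
  have descend : ∀ k j, j + k = 2 * n → ∀ y : Fin (k + 2) → ℝ, StrictMono y →
      (∀ i, y i ∈ Set.Icc a b) → (∀ i, iteratedDeriv j f (y i) = 0) → False := by
    intro k
    induction k with
    | zero =>
      intro j hj y _ hmem hz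
      rw [Nat.add_zero] at hj
      subst hj
      exact absurd (hz 0) (ne_of_gt (hpos' (y 0) (hmem 0)))
    | succ k ih =>
      intro j hj y hy hmem hz
      have hjlt : j < 2 * n := by omega
      obtain ⟨c, hc1, hc2, hc3⟩ :=
        rolle_chain a b (iteratedDeriv j f) (hcont j hjlt) (k + 1) y hy hmem hz
      refine ih (j + 1) (by omega) c hc1 hc2 fun i => ?_
      rw [iteratedDeriv_succ]
      exact hc3 i
  by_contra hcard
  -- extract n+1 zeros
  have hle : (↑(n + 1) : ℕ∞) ≤ {x | x ∈ Set.Icc a b ∧ f x = 0}.encard := by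
    push_cast
    exact Order.add_one_le_of_lt (lt_of_not_ge hcard)
  obtain ⟨t, hts, htcard⟩ := Set.exists_subset_encard_eq hle
  have htfin : t.Finite := Set.finite_of_encard_eq_coe htcard
  have htc : htfin.toFinset.card = n + 1 := by
    have h2 := htfin.encard_eq_coe_toFinset_card
    rw [htcard] at h2
    exact_mod_cast h2.symm
  set e := htfin.toFinset.orderIsoOfFin htc with he
  set x : Fin (n + 1) → ℝ := fun i => (e i : ℝ) with hx
  have hxmono : StrictMono x := fun i j hij => e.strictMono hij
  have hxz : ∀ i, x i ∈ Set.Icc a b ∧ f (x i) = 0 := by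
    intro i
    have : x i ∈ t := by
      have := (e i).2
      rwa [Set.Finite.mem_toFinset] at this
    exact hts this
  -- each zero is interior
  have hxint : ∀ i, x i ∈ Set.Ioo a b := by
    intro i
    obtain ⟨⟨h1, h2⟩, hz⟩ := hxz i
    refine ⟨lt_of_le_of_ne h1 ?_, lt_of_le_of_ne h2 ?_⟩
    · intro h; rw [h] at hfa; linarith
    · intro h; rw [h] at hz; linarith
  -- f differentiable on J
  have hfd : DifferentiableOn ℝ f J := by
    have := hdiff' 0 (by omega)
    rwa [iteratedDeriv_zero] at this
  -- f' vanishes at each zero (interior local min)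
  have hderiv0 : ∀ i, deriv f (x i) = 0 := by
    intro i
    have hmin : IsLocalMin f (x i) := by
      have hnb : Set.Ioo a b ∈ nhds (x i) := isOpen_Ioo.mem_nhds (hxint i)
      refine Filter.eventually_of_mem hnb fun y hy => ?_
      rw [(hxz i).2]
      exact hnonneg y (Set.Ioo_subset_Icc_self hy)
    exact hmin.deriv_eq_zero
  -- f continuous on Icc a b
  have hfc : ContinuousOn f (Set.Icc a b) := (hfd.continuousOn).mono hJ
  -- Rolle points between consecutive zeros of f
  have key : ∀ i : Fin n, ∃ c ∈ Set.Ioo (x i.castSucc) (x i.succ), deriv f c = 0 := by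
    intro i
    refine exists_deriv_eq_zero (hxmono (Fin.castSucc_lt_succ (i := i))) (hfc.mono ?_)
      (by rw [(hxz i.castSucc).2, (hxz i.succ).2])
    intro t ht
    exact ⟨le_trans (hxz i.castSucc).1.1 ht.1, le_trans ht.2 (hxz i.succ).1.2⟩
  choose c hcmem hc0 using key
  -- combine into a finset of 2n+1 zeros of deriv f
  set S : Finset ℝ := (Finset.image x Finset.univ) ∪ (Finset.image c Finset.univ) with hS
  have hcmono : StrictMono c := by
    intro i j hij
    have h1 : c i < x i.succ := (hcmem i).2
    have h2 : x j.castSucc < c j := (hcmem j).1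
    have h3 : x i.succ ≤ x j.castSucc := by
      apply hxmono.monotone
      rw [Fin.succ_le_castSucc_iff]
      exact Fin.castSucc_lt_castSucc_iff.mpr hij
    linarith
  have hxc : ∀ (i : Fin (n+1)) (j : Fin n), x i ≠ c j := by
    intro i j h
    rcases le_or_gt i j.castSucc with hle | hlt
    · have : x i ≤ x j.castSucc := hxmono.monotone hle
      have := (hcmem j).1
      linarith [h ▸ this]
    · have hji : j.succ ≤ i := Fin.castSucc_lt_iff_succ_le.mp hlt
      have : x j.succ ≤ x i := hxmono.monotone hji
      have := (hcmem j).2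
      linarith [h ▸ this]
  have hScard : S.card = 2 * n + 1 := by
    rw [hS, Finset.card_union_of_disjoint, Finset.card_image_of_injective _ hxmono.injective,
      Finset.card_image_of_injective _ hcmono.injective, Finset.card_univ, Finset.card_univ,
      Fintype.card_fin, Fintype.card_fin]
    · omega
    · rw [Finset.disjoint_left]
      rintro z hz1 hz2
      simp only [Finset.mem_image, Finset.mem_univ, true_and] at hz1 hz2
      obtain ⟨i, rfl⟩ := hz1
      obtain ⟨j, hj⟩ := hz2
      exact hxc i j hj.symm
  have hSmem : ∀ z ∈ S, z ∈ Set.Icc a b := by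
    intro z hz
    rw [hS, Finset.mem_union] at hz
    rcases hz with hz | hz <;> simp only [Finset.mem_image, Finset.mem_univ, true_and] at hz
    · obtain ⟨i, rfl⟩ := hz; exact (hxz i).1
    · obtain ⟨j, rfl⟩ := hz
      exact ⟨le_trans (hxz j.castSucc).1.1 (hcmem j).1.le,
        le_trans (hcmem j).2.le (hxz j.succ).1.2⟩
  have hSz : ∀ z ∈ S, deriv f z = 0 := by
    intro z hz
    rw [hS, Finset.mem_union] at hz
    rcases hz with hz | hz <;> simp only [Finset.mem_image, Finset.mem_univ, true_and] at hz
    · obtain ⟨i, rfl⟩ := hz; exact hderiv0 i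
    · obtain ⟨j, rfl⟩ := hz; exact hc0 j
  -- enumerate S in increasing order
  set g := S.orderIsoOfFin hScard with hg
  set y : Fin (2 * n - 1 + 2) → ℝ := fun i => (g (Fin.cast (by omega) i) : ℝ) with hy
  have hymono : StrictMono y := by
    intro i j hij
    exact g.strictMono (by rw [Fin.lt_def] at hij ⊢; exact hij)
  refine descend (2 * n - 1) 1 (by omega) y hymono ?_ ?_
  · intro i
    exact hSmem _ (g (Fin.cast (by omega) i)).2
  · intro i
    rw [iteratedDeriv_one]
    exact hSz _ (g (Fin.cast (by omega) i)).2
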